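/- Let Q > 0 and t ∈ ℝ, write q = Qe^t, and for real λ > 2√q let x₋ = (λ − √(λ² − 4q))/2 and x₊ = (λ + √(λ² − 4q))/2. Define ℐ₁(λ, t) = ∫_{x₋}^{x₊} (λ − x − Qe^t/x) · dx/x. Then: (i) ∂ℐ₁/∂λ = log(x₊/x₋); and (ii) ∂ℐ₁/∂t = −(x₊ − x₋) = −√(λ² − 4Qe^t). -/

import Mathlib

open intervalIntegral

lemma cp1_closed_form (l q a b : ℝ) (ha : 0 < a) (hab : a ≤ b) :
    ∫ x in a..b, (l - x - q / x) / x
      = (l * Real.log b - b + q / b) - (l * Real.log a - a + q / a) := by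
  have hb : 0 < b := lt_of_lt_of_le ha hab
  apply intervalIntegral.integral_eq_sub_of_hasDerivAt
      (f := fun x => l * Real.log x - x + q / x)
  · intro x hx
    rw [Set.uIcc_of_le hab] at hx
    have hx0 : 0 < x := lt_of_lt_of_le ha hx.1
    have h1 : HasDerivAt (fun y : ℝ => l * Real.log y - y + q / y)
        (l * x⁻¹ - 1 + (0 * x - q * 1) / x ^ 2) x :=
      (((Real.hasDerivAt_log hx0.ne').const_mul l).sub (hasDerivAt_id x)).add
        ((hasDerivAt_const x q).div (hasDerivAt_id x) hx0.ne')
    convert h1 using 1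
    · rfl
    · rfl
    field_simp
    ring
  · apply ContinuousOn.intervalIntegrable
    apply ContinuousOn.div _ continuousOn_id
    · intro x hx
      rw [Set.uIcc_of_le hab] at hx
      exact (lt_of_lt_of_le ha hx.1).ne'
    · fun_prop (disch := intro x hx; rw [Set.uIcc_of_le hab] at hx; exact (lt_of_lt_of_le ha hx.1).ne')

/-- basic facts from `2√(Q e^t) < l`. -/
lemma cp1_facts (Q t' l : ℝ) (hQ : 0 < Q) (hl : 2 * Real.sqrt (Q * Real.exp t') < l) :
    0 < l ^ 2 - 4 * Q * Real.exp t' ∧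
    Real.sqrt (l ^ 2 - 4 * Q * Real.exp t') < l ∧
    ((l - Real.sqrt (l ^ 2 - 4 * Q * Real.exp t')) / 2) *
      ((l + Real.sqrt (l ^ 2 - 4 * Q * Real.exp t')) / 2) = Q * Real.exp t' := by
  have hq : 0 < Q * Real.exp t' := mul_pos hQ (Real.exp_pos t')
  have hl0 : 0 < l := lt_of_le_of_lt (by positivity) hl
  have hsq : (2 * Real.sqrt (Q * Real.exp t')) ^ 2 < l ^ 2 :=
    pow_lt_pow_left₀ hl (by positivity) (by norm_num)
  rw [mul_pow, Real.sq_sqrt hq.le] at hsq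
  have h1 : 0 < l ^ 2 - 4 * Q * Real.exp t' := by nlinarith
  have h2 : Real.sqrt (l ^ 2 - 4 * Q * Real.exp t') < l := by
    have := Real.sqrt_lt_sqrt h1.le (show l ^ 2 - 4 * Q * Real.exp t' < l ^ 2 by nlinarith)
    rwa [Real.sqrt_sq hl0.le] at this
  refine ⟨h1, h2, ?_⟩
  have := Real.sq_sqrt h1.le
  nlinarith [this]

lemma cp1_I1_eq (Q t' l : ℝ) (hQ : 0 < Q) (hl : 2 * Real.sqrt (Q * Real.exp t') < l) :
    (∫ x in ((l - Real.sqrt (l ^ 2 - 4 * Q * Real.exp t')) / 2)..((l + Real.sqrt (l ^ 2 - 4 * Q * Real.exp t')) / 2),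
        (l - x - Q * Real.exp t' / x) / x)
      = l * (Real.log ((l + Real.sqrt (l ^ 2 - 4 * Q * Real.exp t')) / 2)
            - Real.log ((l - Real.sqrt (l ^ 2 - 4 * Q * Real.exp t')) / 2))
        - 2 * Real.sqrt (l ^ 2 - 4 * Q * Real.exp t') := by
  obtain ⟨h1, h2, h3⟩ := cp1_facts Q t' l hQ hl
  set s := Real.sqrt (l ^ 2 - 4 * Q * Real.exp t') with hs
  have hs0 : 0 ≤ s := Real.sqrt_nonneg _
  have hxm : 0 < (l - s) / 2 := by linarith
  have hxp : 0 < (l + s) / 2 := by linarith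
  rw [cp1_closed_form l (Q * Real.exp t') _ _ hxm (by linarith)]
  have e1 : Q * Real.exp t' / ((l + s) / 2) = (l - s) / 2 := by
    rw [div_eq_iff hxp.ne']; linear_combination -h3
  have e2 : Q * Real.exp t' / ((l - s) / 2) = (l + s) / 2 := by
    rw [div_eq_iff hxm.ne']; linear_combination -h3
  rw [e1, e2]
  ring

theorem cp1_first_period_vector (Q : ℝ) (hQ : 0 < Q) (t lam : ℝ)
    (h : 2 * Real.sqrt (Q * Real.exp t) < lam) :
    let xm : ℝ → ℝ → ℝ := fun l t' => (l - Real.sqrt (l ^ 2 - 4 * Q * Real.exp t')) / 2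
    let xp : ℝ → ℝ → ℝ := fun l t' => (l + Real.sqrt (l ^ 2 - 4 * Q * Real.exp t')) / 2
    let I1 : ℝ → ℝ → ℝ := fun l t' =>
      ∫ x in (xm l t')..(xp l t'), (l - x - Q * Real.exp t' / x) / x
    HasDerivAt (fun l => I1 l t) (Real.log (xp lam t / xm lam t)) lam ∧
    HasDerivAt (fun t' => I1 lam t') (-(xp lam t - xm lam t)) t ∧
    xp lam t - xm lam t = Real.sqrt (lam ^ 2 - 4 * Q * Real.exp t) := by
  intro xm xp I1
  obtain ⟨h1, h2, h3⟩ := cp1_facts Q t lam hQ h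
  set s := Real.sqrt (lam ^ 2 - 4 * Q * Real.exp t) with hs
  have hs0 : 0 < s := Real.sqrt_pos.2 h1
  have hxm : 0 < (lam - s) / 2 := by linarith
  have hxp : 0 < (lam + s) / 2 := by linarith
  have hs2 : s ^ 2 = lam ^ 2 - 4 * Q * Real.exp t := Real.sq_sqrt h1.le
  refine ⟨?_, ?_, by show (lam + s)/2 - (lam - s)/2 = s; ring⟩
  · -- derivative in lam
    have hev : (fun l => I1 l t) =ᶠ[nhds lam]
        (fun l => l * (Real.log ((l + Real.sqrt (l ^ 2 - 4 * Q * Real.exp t)) / 2)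
            - Real.log ((l - Real.sqrt (l ^ 2 - 4 * Q * Real.exp t)) / 2))
          - 2 * Real.sqrt (l ^ 2 - 4 * Q * Real.exp t)) := by
      filter_upwards [eventually_gt_nhds h] with l hl
      exact cp1_I1_eq Q t l hQ hl
    have hA : HasDerivAt (fun l : ℝ => l ^ 2 - 4 * Q * Real.exp t) (2 * lam) lam := by
      simpa using (hasDerivAt_pow 2 lam).sub_const (4 * Q * Real.exp t)
    have hS : HasDerivAt (fun l : ℝ => Real.sqrt (l ^ 2 - 4 * Q * Real.exp t))
        (2 * lam / (2 * s)) lam := hA.sqrt h1.ne'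
    have hXp : HasDerivAt (fun l : ℝ => (l + Real.sqrt (l ^ 2 - 4 * Q * Real.exp t)) / 2)
        ((1 + 2 * lam / (2 * s)) / 2) lam := ((hasDerivAt_id lam).add hS).div_const 2
    have hXm : HasDerivAt (fun l : ℝ => (l - Real.sqrt (l ^ 2 - 4 * Q * Real.exp t)) / 2)
        ((1 - 2 * lam / (2 * s)) / 2) lam := ((hasDerivAt_id lam).sub hS).div_const 2
    have hLp := hXp.log hxp.ne'
    have hLm := hXm.log hxm.ne'
    have hG := (((hasDerivAt_id lam).mul (hLp.sub hLm)).sub (hS.const_mul 2))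
    refine HasDerivAt.congr_of_eventuallyEq ?_ hev
    convert hG using 1
    show Real.log (xp lam t / xm lam t) = _
    show Real.log ((lam + s)/2 / ((lam - s)/2)) = _
    rw [Real.log_div hxp.ne' hxm.ne']
    have hlps : lam + s ≠ 0 := by intro hc; rw [hc] at hxp; norm_num at hxp
    have hlms : lam - s ≠ 0 := by linarith
    simp only [Pi.sub_apply, id, ← hs]
    field_simp
    ring
    rfl
  · -- derivative in t
    have hev : (fun t' => I1 lam t') =ᶠ[nhds t]
        (fun t' => lam * (Real.log ((lam + Real.sqrt (lam ^ 2 - 4 * Q * Real.exp t')) / 2)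
            - Real.log ((lam - Real.sqrt (lam ^ 2 - 4 * Q * Real.exp t')) / 2))
          - 2 * Real.sqrt (lam ^ 2 - 4 * Q * Real.exp t')) := by
      have hc : ContinuousAt (fun t' : ℝ => 2 * Real.sqrt (Q * Real.exp t')) t := by fun_prop
      filter_upwards [hc.eventually_lt continuousAt_const h] with t' hl
      exact cp1_I1_eq Q t' lam hQ hl
    have hA : HasDerivAt (fun t' : ℝ => lam ^ 2 - 4 * Q * Real.exp t')
        (-(4 * Q * Real.exp t)) t := by
      simpa using ((Real.hasDerivAt_exp t).const_mul (4 * Q)).const_sub (lam ^ 2)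
    have hS : HasDerivAt (fun t' : ℝ => Real.sqrt (lam ^ 2 - 4 * Q * Real.exp t'))
        (-(4 * Q * Real.exp t) / (2 * s)) t := hA.sqrt h1.ne'
    have hXp : HasDerivAt (fun t' : ℝ => (lam + Real.sqrt (lam ^ 2 - 4 * Q * Real.exp t')) / 2)
        (-(4 * Q * Real.exp t) / (2 * s) / 2) t := (hS.const_add lam).div_const 2
    have hXm : HasDerivAt (fun t' : ℝ => (lam - Real.sqrt (lam ^ 2 - 4 * Q * Real.exp t')) / 2)
        (-(-(4 * Q * Real.exp t) / (2 * s)) / 2) t := (hS.const_sub lam).div_const 2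
    have hLp := hXp.log hxp.ne'
    have hLm := hXm.log hxm.ne'
    have hG := (((hLp.sub hLm).const_mul lam).sub (hS.const_mul 2))
    refine HasDerivAt.congr_of_eventuallyEq ?_ hev
    convert hG using 1
    show -(xp lam t - xm lam t) = _
    show -((lam + s)/2 - (lam - s)/2) = _
    have hE : 4 * Q * Real.exp t = lam ^ 2 - s ^ 2 := by linarith
    simp only [← hs]
    rw [hE]
    have hlps : lam + s ≠ 0 := by intro hc; rw [hc] at hxp; norm_num at hxp
    have hlms : lam - s ≠ 0 := by linarith
    field_simp
    ring
    rfl
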